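/- Let d ∈ ℕ with d ≥ 1 and γ > 0. There exists a constant C > 0 such that for every y > 0 and every multi-index α ∈ ℕ^d, exp(-y^(-2/γ)) / y^|α| ≤ C · (α!)^γ, where |α| = α₁ + ⋯ + α_d and α! = α₁! ⋯ α_d!. -/

import Mathlib

open Real Finset

lemma aux_choose_le (n k : ℕ) : n.choose k ≤ 2 ^ n := by
  rcases le_or_gt k n with h | h
  · calc n.choose k ≤ ∑ m ∈ range (n+1), n.choose m :=
        Finset.single_le_sum (fun i _ => Nat.zero_le _) (Finset.mem_range.2 (Nat.lt_succ_of_le h))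
      _ = 2 ^ n := Nat.sum_range_choose n
  · simp [Nat.choose_eq_zero_of_lt h]

lemma aux_fact_add (a b : ℕ) :
    (a + b).factorial ≤ 2 ^ (a + b) * (a.factorial * b.factorial) := by
  calc (a+b).factorial = (a+b).choose b * a.factorial * b.factorial :=
        (Nat.add_choose_mul_factorial_mul_factorial a b).symm
    _ ≤ 2 ^ (a+b) * a.factorial * b.factorial := by
        gcongr
        exact aux_choose_le _ _
    _ = 2 ^ (a+b) * (a.factorial * b.factorial) := by ring

lemma aux_multinomial {ι : Type*} [DecidableEq ι] (s : Finset ι) (α : ι → ℕ) :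
    (∑ i ∈ s, α i).factorial ≤ 2 ^ (s.card * ∑ i ∈ s, α i) * ∏ i ∈ s, (α i).factorial := by
  induction s using Finset.induction with
  | empty => simp
  | insert _ _ ha ih =>
    rename_i a s
    rw [Finset.sum_insert ha, Finset.prod_insert ha, Finset.card_insert_of_notMem ha]
    calc (α a + ∑ i ∈ s, α i).factorial
        ≤ 2 ^ (α a + ∑ i ∈ s, α i) * ((α a).factorial * (∑ i ∈ s, α i).factorial) :=
          aux_fact_add _ _
      _ ≤ 2 ^ (α a + ∑ i ∈ s, α i) *
            ((α a).factorial * (2 ^ (s.card * ∑ i ∈ s, α i) * ∏ i ∈ s, (α i).factorial)) := by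
          gcongr
      _ ≤ 2 ^ ((s.card + 1) * (α a + ∑ i ∈ s, α i)) *
            ((α a).factorial * ∏ i ∈ s, (α i).factorial) := by
          have key : 2 ^ (α a + ∑ i ∈ s, α i) * 2 ^ (s.card * (α a + ∑ i ∈ s, α i))
              = 2 ^ ((s.card + 1) * (α a + ∑ i ∈ s, α i)) := by
            rw [← pow_add]; congr 1; ring
          calc 2 ^ (α a + ∑ i ∈ s, α i) *
                ((α a).factorial * (2 ^ (s.card * ∑ i ∈ s, α i) * ∏ i ∈ s, (α i).factorial))
              ≤ 2 ^ (α a + ∑ i ∈ s, α i) *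
                ((α a).factorial * (2 ^ (s.card * (α a + ∑ i ∈ s, α i)) * ∏ i ∈ s, (α i).factorial)) := by
                gcongr
                · norm_num
                · exact Nat.le_add_left _ _
            _ = 2 ^ (α a + ∑ i ∈ s, α i) * 2 ^ (s.card * (α a + ∑ i ∈ s, α i)) *
                ((α a).factorial * ∏ i ∈ s, (α i).factorial) := by ring
            _ = 2 ^ ((s.card + 1) * (α a + ∑ i ∈ s, α i)) *
                ((α a).factorial * ∏ i ∈ s, (α i).factorial) := by rw [key]

lemma aux_pow_le_fact (n : ℕ) : (n : ℝ) ^ n ≤ (n.factorial : ℝ) * Real.exp n := by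
  have h := Real.sum_le_exp_of_nonneg (x := (n:ℝ)) (Nat.cast_nonneg n) (n+1)
  have h2 : (n:ℝ)^n / (n.factorial : ℝ) ≤ Real.exp n := by
    refine le_trans ?_ h
    exact Finset.single_le_sum (f := fun i => (n:ℝ)^i / (i.factorial : ℝ))
      (fun i _ => by positivity) (Finset.mem_range.2 (Nat.lt_succ_self n))
  rw [div_le_iff₀ (by positivity)] at h2
  linarith

lemma aux_max (t s : ℝ) (ht : 0 < t) (hs : 0 ≤ s) :
    Real.exp (-t) * t ^ s ≤ s ^ s := by
  rcases eq_or_lt_of_le hs with rfl | hs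
  · simpa [Real.rpow_zero] using Real.exp_le_one_iff.2 (by linarith : -t ≤ 0)
  · rw [Real.rpow_def_of_pos ht, Real.rpow_def_of_pos hs, ← Real.exp_add]
    rw [Real.exp_le_exp]
    have hlog : Real.log (t / s) ≤ t / s - 1 := Real.log_le_sub_one_of_pos (by positivity)
    rw [Real.log_div (ne_of_gt ht) (ne_of_gt hs)] at hlog
    have : s * (Real.log t - Real.log s) ≤ s * (t / s - 1) :=
      mul_le_mul_of_nonneg_left hlog hs.le
    have h2 : s * (t / s) = t := by field_simp
    nlinarith

lemma aux_geom (K : ℝ) (hK : 1 ≤ K) :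
    ∃ C : ℝ, 1 ≤ C ∧ ∀ n : ℕ, K ^ n ≤ C * (n:ℝ) ^ ((n:ℝ)/2) := by
  obtain ⟨N, hN⟩ := exists_nat_ge (K^2)
  refine ⟨K ^ N, one_le_pow₀ hK, fun n => ?_⟩
  have hone : ∀ m : ℕ, (1:ℝ) ≤ (m:ℝ) ^ ((m:ℝ)/2) := by
    intro m
    rcases Nat.eq_zero_or_pos m with rfl | hm
    · norm_num
    · exact Real.one_le_rpow (by exact_mod_cast hm) (by positivity)
  rcases le_or_gt n N with h | h
  · calc K ^ n ≤ K ^ N := pow_le_pow_right₀ hK h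
      _ ≤ K ^ N * (n:ℝ) ^ ((n:ℝ)/2) :=
        le_mul_of_one_le_right (by positivity) (hone n)
  · have hn2 : K ^ 2 ≤ (n:ℝ) := le_trans hN (by exact_mod_cast h.le)
    have hsq : K ≤ Real.sqrt n := Real.le_sqrt_of_sq_le hn2
    calc K ^ n ≤ (Real.sqrt n) ^ n := pow_le_pow_left₀ (by linarith) hsq n
      _ = (n:ℝ) ^ ((n:ℝ)/2) := by
          rw [Real.sqrt_eq_rpow, ← Real.rpow_natCast ((n:ℝ) ^ ((1:ℝ)/2)) n,
            ← Real.rpow_mul (Nat.cast_nonneg n)]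
          ring_nf
      _ ≤ K ^ N * (n:ℝ) ^ ((n:ℝ)/2) :=
        le_mul_of_one_le_left (by positivity) (one_le_pow₀ hK)

theorem stmt_0 (d : ℕ) (hd : 1 ≤ d) (γ : ℝ) (hγ : 0 < γ) :
    ∃ C : ℝ, 0 < C ∧ ∀ y : ℝ, 0 < y → ∀ α : Fin d → ℕ,
      Real.exp (-y ^ (-(2 / γ))) / y ^ (∑ i, α i) ≤
        C * ((∏ i, Nat.factorial (α i) : ℕ) : ℝ) ^ γ := by
  have hK : (1:ℝ) ≤ max 1 (Real.sqrt (γ/2) * Real.exp 1 * 2 ^ d) := le_max_left _ _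
  set K : ℝ := max 1 (Real.sqrt (γ/2) * Real.exp 1 * 2 ^ d) with hKdef
  obtain ⟨C₁, hC₁, hgeom⟩ := aux_geom K hK
  refine ⟨C₁ ^ γ, Real.rpow_pos_of_pos (by linarith) γ, ?_⟩
  intro y hy α
  set n : ℕ := ∑ i, α i with hn
  set P : ℕ := ∏ i, (α i).factorial with hP
  have hP1 : (1:ℝ) ≤ (P:ℝ) := by
    exact_mod_cast Finset.one_le_prod' (fun i _ => (α i).factorial_pos)
  have ht : 0 < y ^ (-(2/γ)) := Real.rpow_pos_of_pos hy _
  have hs0 : (0:ℝ) ≤ (n:ℝ) * γ / 2 := by positivity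
  -- rewrite LHS
  have hB : (y ^ (-(2/γ))) ^ ((n:ℝ) * γ / 2) = (y ^ n : ℝ)⁻¹ := by
    rw [← Real.rpow_natCast y n, ← Real.rpow_neg hy.le,
      ← Real.rpow_mul hy.le]
    congr 1
    field_simp
  -- key inequality
  have key : ((n:ℝ) * γ / 2) ^ ((n:ℝ)/2) ≤ C₁ * (P:ℝ) := by
    rcases Nat.eq_zero_or_pos n with hn0 | hn1
    · rw [hn0]
      norm_num
      calc (1:ℝ) ≤ C₁ := hC₁
        _ ≤ C₁ * P := le_mul_of_one_le_right (by linarith) hP1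
    · have hnpos : (0:ℝ) < (n:ℝ) := by exact_mod_cast hn1
      have hfac : ((n.factorial : ℕ) : ℝ) ≤ (2:ℝ) ^ (d * n) * (P:ℝ) := by
        have := aux_multinomial (Finset.univ : Finset (Fin d)) α
        rw [Finset.card_univ, Fintype.card_fin] at this
        exact_mod_cast this
      have hnn : (n:ℝ) ^ n ≤ ((2:ℝ)^d)^n * (Real.exp 1)^n * (P:ℝ) := by
        calc (n:ℝ) ^ n ≤ (n.factorial : ℝ) * Real.exp n := aux_pow_le_fact n
          _ ≤ ((2:ℝ) ^ (d*n) * (P:ℝ)) * Real.exp n := by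
              gcongr
          _ = ((2:ℝ)^d)^n * (Real.exp 1)^n * (P:ℝ) := by
              rw [pow_mul, Real.exp_one_pow]
              ring
      -- split the base
      have hsplit : ((n:ℝ) * γ / 2) ^ ((n:ℝ)/2)
          = (n:ℝ) ^ ((n:ℝ)/2) * (Real.sqrt (γ/2)) ^ n := by
        rw [show (n:ℝ) * γ / 2 = (n:ℝ) * (γ/2) by ring,
          Real.mul_rpow (Nat.cast_nonneg n) (by positivity),
          Real.sqrt_eq_rpow, ← Real.rpow_natCast ((γ/2) ^ ((1:ℝ)/2)) n,
          ← Real.rpow_mul (by positivity : (0:ℝ) ≤ γ/2)]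
        ring_nf
      have hhalf : (n:ℝ) ^ ((n:ℝ)/2) * (n:ℝ) ^ ((n:ℝ)/2) = (n:ℝ) ^ n := by
        rw [← Real.rpow_add hnpos, ← Real.rpow_natCast (n:ℝ) n]
        ring_nf
      have hE : (0:ℝ) < ((Real.exp 1) * 2^d) ^ n := by positivity
      rw [hsplit]
      rw [← mul_le_mul_iff_of_pos_right hE]
      have hKn : (Real.sqrt (γ/2) * Real.exp 1 * 2^d) ^ n ≤ K ^ n :=
        pow_le_pow_left₀ (by positivity) (le_max_right _ _) n
      calc (n:ℝ) ^ ((n:ℝ)/2) * (Real.sqrt (γ/2)) ^ n * ((Real.exp 1) * 2^d) ^ n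
          = (n:ℝ) ^ ((n:ℝ)/2) * (Real.sqrt (γ/2) * Real.exp 1 * 2^d) ^ n := by
            rw [mul_pow, mul_pow]; ring
        _ ≤ (n:ℝ) ^ ((n:ℝ)/2) * K ^ n :=
            mul_le_mul_of_nonneg_left hKn (by positivity)
        _ ≤ (n:ℝ) ^ ((n:ℝ)/2) * (C₁ * (n:ℝ) ^ ((n:ℝ)/2)) :=
            mul_le_mul_of_nonneg_left (hgeom n) (by positivity)
        _ = C₁ * ((n:ℝ) ^ ((n:ℝ)/2) * (n:ℝ) ^ ((n:ℝ)/2)) := by ring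
        _ = C₁ * (n:ℝ) ^ n := by rw [hhalf]
        _ ≤ C₁ * (((2:ℝ)^d)^n * (Real.exp 1)^n * (P:ℝ)) :=
            mul_le_mul_of_nonneg_left hnn (by linarith)
        _ = C₁ * (P:ℝ) * ((Real.exp 1) * 2^d) ^ n := by
            rw [mul_pow]; ring
  -- assemble
  have hyn : (0:ℝ) < (y:ℝ) ^ n := by positivity
  calc Real.exp (-y ^ (-(2/γ))) / y ^ n
      = Real.exp (-(y ^ (-(2/γ)))) * (y ^ (-(2/γ))) ^ ((n:ℝ) * γ / 2) := by
        rw [hB, div_eq_mul_inv]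
    _ ≤ ((n:ℝ) * γ / 2) ^ ((n:ℝ) * γ / 2) := aux_max _ _ ht hs0
    _ = (((n:ℝ) * γ / 2) ^ ((n:ℝ)/2)) ^ γ := by
        rw [← Real.rpow_mul hs0]
        ring_nf
    _ ≤ (C₁ * (P:ℝ)) ^ γ := by
        apply Real.rpow_le_rpow (Real.rpow_nonneg hs0 _) key hγ.le
    _ = C₁ ^ γ * (P:ℝ) ^ γ :=
        Real.mul_rpow (by linarith) (by linarith)
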